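/- If K is a compact self-adjoint operator on a Hilbert space and E is an orthogonal projection, then for every ε > 0 there exists a finite-rank orthogonal projection F with range contained in the range of E such that ‖(I−E)K(I−E) − (I−F)K(I−F)‖ < ε. -/

import Mathlib

open ContinuousLinearMap

/-- If `K` is a compact self-adjoint operator on a separable complex Hilbert space and `E` is an
orthogonal projection, then for every `ε > 0` there is a finite-rank orthogonal projection `F`
with range contained in the range of `E` such that
`‖(I−E)K(I−E) − (I−F)K(I−F)‖ < ε`. -/
theorem stmt13 {H : Type*} [NormedAddCommGroup H] [InnerProductSpace ℂ H] [CompleteSpace H]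
    [TopologicalSpace.SeparableSpace H]
    (K E : H →L[ℂ] H) (hK : IsSelfAdjoint K) (hKc : IsCompactOperator K)
    (hE : IsSelfAdjoint E) (hEproj : E ∘L E = E) (ε : ℝ) (hε : 0 < ε) :
    ∃ F : H →L[ℂ] H, IsSelfAdjoint F ∧ F ∘L F = F ∧
      FiniteDimensional ℂ (LinearMap.range (F : H →ₗ[ℂ] H)) ∧
      LinearMap.range (F : H →ₗ[ℂ] H) ≤ LinearMap.range (E : H →ₗ[ℂ] H) ∧
      ‖(1 - E) ∘L K ∘L (1 - E) - (1 - F) ∘L K ∘L (1 - F)‖ < ε := by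
  classical
  have hEadj : ContinuousLinearMap.adjoint E = E := hE.adjoint_eq
  have hEapp : ∀ x, E (E x) = E x := fun x => by
    have := congrArg (fun T : H →L[ℂ] H => T x) hEproj
    simpa using this
  -- E is a contraction
  have hEnorm : ∀ x, ‖E x‖ ≤ ‖x‖ := by
    intro x
    rcases eq_or_ne (E x) 0 with h | h
    · simp [h]
    have h1 : ‖E x‖ ^ 2 = RCLike.re (inner ℂ (E x) (E x) : ℂ) := norm_sq_eq_re_inner (𝕜 := ℂ) _
    have h2 : (inner ℂ (E x) (E x) : ℂ) = (inner ℂ x (E x) : ℂ) := by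
      calc (inner ℂ (E x) (E x) : ℂ)
          = inner ℂ ((ContinuousLinearMap.adjoint E) x) (E x) := by rw [hEadj]
        _ = inner ℂ x (E (E x)) := adjoint_inner_left E (E x) x
        _ = inner ℂ x (E x) := by rw [hEapp]
    have h3 : ‖E x‖ ^ 2 ≤ ‖x‖ * ‖E x‖ := by
      rw [h1, h2]
      calc RCLike.re (inner ℂ x (E x) : ℂ) ≤ ‖(inner ℂ x (E x) : ℂ)‖ := RCLike.re_le_norm _
        _ ≤ ‖x‖ * ‖E x‖ := norm_inner_le_norm _ _
    have hpos : 0 < ‖E x‖ := norm_pos_iff.mpr h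
    nlinarith
  -- range of E as a submodule
  set V : Submodule ℂ H := LinearMap.range (E : H →ₗ[ℂ] H) with hV
  have hmemV : ∀ x, E x ∈ V := fun x => ⟨x, rfl⟩
  have horth : ∀ x, x - E x ∈ Vᗮ := by
    intro x
    rw [Submodule.mem_orthogonal]
    rintro u ⟨y, rfl⟩
    show (inner ℂ ((E : H →ₗ[ℂ] H) y) (x - E x) : ℂ) = 0
    have hc : (E : H →ₗ[ℂ] H) y = E y := rfl
    rw [hc]
    calc (inner ℂ (E y) (x - E x) : ℂ)
        = inner ℂ ((ContinuousLinearMap.adjoint E) y) (x - E x) := by rw [hEadj]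
      _ = inner ℂ y (E (x - E x)) := adjoint_inner_left E (x - E x) y
      _ = 0 := by rw [map_sub, hEapp, sub_self, inner_zero_right]
  -- compactness data
  obtain ⟨S, hSc, hpre⟩ := hKc
  obtain ⟨r, hr, hball⟩ := Metric.mem_nhds_iff.mp hpre
  set ρ : ℝ := r / 2 with hρdef
  have hρ : 0 < ρ := by positivity
  set δ : ℝ := ρ * ε / 16 with hδdef
  have hδ : 0 < δ := by positivity
  obtain ⟨t, htfin, htcov⟩ := (Metric.totallyBounded_iff.mp hSc.totallyBounded) δ hδ
  -- the finite-dimensional subspace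
  set W : Submodule ℂ H := Submodule.span ℂ (E '' t) with hW
  haveI hWfd : FiniteDimensional ℂ W :=
    FiniteDimensional.span_of_finite ℂ (htfin.image _)
  have hWV : W ≤ V := by
    rw [hW, Submodule.span_le]
    rintro _ ⟨y, _, rfl⟩
    exact hmemV y
  set F : H →L[ℂ] H := W.subtypeL ∘L W.orthogonalProjectionOnto with hF
  have hFsa : IsSelfAdjoint F := isSelfAdjoint_starProjection W
  have hFmem : ∀ x, F x ∈ W := fun x => (W.orthogonalProjectionOnto x).2
  have hFid : ∀ x ∈ W, F x = x := by
    intro x hx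
    have := Submodule.orthogonalProjectionOnto_mem_subspace_eq_self (K := W) ⟨x, hx⟩
    simpa [hF] using congrArg (Subtype.val) this
  have hFproj : F ∘L F = F := by
    ext x
    exact hFid (F x) (hFmem x)
  have hFnorm : ∀ x, ‖F x‖ ≤ ‖x‖ := by
    intro x
    have : ‖F x‖ = ‖W.orthogonalProjectionOnto x‖ := rfl
    rw [this]
    calc ‖W.orthogonalProjectionOnto x‖ ≤ ‖W.orthogonalProjectionOnto‖ * ‖x‖ := le_opNorm _ _
      _ ≤ 1 * ‖x‖ := by
          have := Submodule.orthogonalProjectionOnto_norm_le W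
          have hx : (0:ℝ) ≤ ‖x‖ := norm_nonneg _
          nlinarith
      _ = ‖x‖ := one_mul _
  have hrangeF : LinearMap.range (F : H →ₗ[ℂ] H) = W := by
    apply le_antisymm
    · rintro _ ⟨y, rfl⟩
      exact hFmem y
    · intro w hw
      exact ⟨w, hFid w hw⟩
  -- F agrees with E on points of t
  have hFt : ∀ y ∈ t, F y = E y := by
    intro y hy
    have h1 : F (y - E y) = 0 := by
      have : y - E y ∈ Wᗮ := Submodule.orthogonal_le hWV (horth y)
      have h0 := Submodule.orthogonalProjectionOnto_apply_of_mem_orthogonal this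
      show W.subtypeL (W.orthogonalProjectionOnto (y - E y)) = 0
      rw [h0]; simp
    have h2 : F (E y) = E y := hFid (E y) (Submodule.subset_span ⟨y, hy, rfl⟩)
    have := map_sub F y (E y)
    rw [h1] at this
    have h3 : F y = F (E y) := by linear_combination (norm := abel_nf) -this
    rw [h3, h2]
  -- key norm bound
  have hkey : ‖(E - F) ∘L K‖ ≤ ε / 8 := by
    apply opNorm_le_bound _ (by positivity)
    intro x
    rcases eq_or_ne x 0 with rfl | hx
    · simp
    have hxn : 0 < ‖x‖ := norm_pos_iff.mpr hx
    set s : ℝ := ρ / ‖x‖ with hs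
    have hspos : 0 < s := by positivity
    have hx' : ‖(s : ℂ) • x‖ = ρ := by
      rw [norm_smul]
      have hcs0 : ‖(s : ℂ)‖ = s := by simp [abs_of_pos hspos]
      rw [hcs0, hs]
      field_simp
    have hmemS : K ((s : ℂ) • x) ∈ S := by
      apply hball
      rw [Metric.mem_ball, dist_zero_right, hx']
      rw [hρdef]; linarith
    obtain ⟨y, hyt, hyb⟩ := Set.mem_iUnion₂.mp (htcov hmemS)
    have hdist : ‖K ((s : ℂ) • x) - y‖ < δ := by
      rw [Metric.mem_ball, dist_eq_norm] at hyb
      exact hyb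
    have hEF0 : (E - F) y = 0 := by
      simp [ContinuousLinearMap.sub_apply, hFt y hyt]
    have hbound : ‖(E - F) (K ((s : ℂ) • x))‖ ≤ 2 * δ := by
      have heq : (E - F) (K ((s : ℂ) • x)) = (E - F) (K ((s : ℂ) • x) - y) := by
        rw [map_sub, hEF0, sub_zero]
      rw [heq, ContinuousLinearMap.sub_apply]
      calc ‖E (K ((s:ℂ) • x) - y) - F (K ((s:ℂ) • x) - y)‖
          ≤ ‖E (K ((s:ℂ) • x) - y)‖ + ‖F (K ((s:ℂ) • x) - y)‖ := norm_sub_le _ _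
        _ ≤ ‖K ((s:ℂ) • x) - y‖ + ‖K ((s:ℂ) • x) - y‖ := add_le_add (hEnorm _) (hFnorm _)
        _ ≤ 2 * δ := by linarith
    have hsmul : (E - F) (K ((s : ℂ) • x)) = (s : ℂ) • ((E - F) (K x)) := by
      rw [map_smul, map_smul]
    rw [hsmul] at hbound
    rw [norm_smul] at hbound
    have hcs : ‖(s : ℂ)‖ = s := by
      simp [abs_of_pos hspos]
    rw [hcs] at hbound
    have h2 : ρ / ‖x‖ * ‖(E - F) (K x)‖ ≤ 2 * (ρ * ε / 16) := by
      rw [← hs, ← hδdef]; exact hbound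
    have h3 : ρ * ‖(E - F) (K x)‖ ≤ ρ * (ε / 8 * ‖x‖) := by
      calc ρ * ‖(E - F) (K x)‖ = (ρ / ‖x‖ * ‖(E - F) (K x)‖) * ‖x‖ := by field_simp
        _ ≤ (2 * (ρ * ε / 16)) * ‖x‖ := mul_le_mul_of_nonneg_right h2 (norm_nonneg x)
        _ = ρ * (ε / 8 * ‖x‖) := by ring
    have hconv : ((E - F) ∘L K) x = (E - F) (K x) := rfl
    rw [hconv]
    exact le_of_mul_le_mul_left h3 hρ
  -- the adjoint bound
  have hEFsa : IsSelfAdjoint (E - F) := hE.sub hFsa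
  have hkey2 : ‖K ∘L (E - F)‖ ≤ ε / 8 := by
    have hstar : K ∘L (E - F) = star ((E - F) ∘L K) := by
      rw [star_eq_adjoint, adjoint_comp, hK.adjoint_eq, hEFsa.adjoint_eq]
    rw [hstar, norm_star]
    exact hkey
  have hnorm1E : ‖(1 - E : H →L[ℂ] H)‖ ≤ 2 := by
    apply opNorm_le_bound _ (by norm_num)
    intro x
    rw [ContinuousLinearMap.sub_apply, ContinuousLinearMap.one_apply]
    calc ‖x - E x‖ ≤ ‖x‖ + ‖E x‖ := norm_sub_le _ _
      _ ≤ 2 * ‖x‖ := by have := hEnorm x; linarith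
  have hnorm1F : ‖(1 - F : H →L[ℂ] H)‖ ≤ 2 := by
    apply opNorm_le_bound _ (by norm_num)
    intro x
    rw [ContinuousLinearMap.sub_apply, ContinuousLinearMap.one_apply]
    calc ‖x - F x‖ ≤ ‖x‖ + ‖F x‖ := norm_sub_le _ _
      _ ≤ 2 * ‖x‖ := by have := hFnorm x; linarith
  have hdecomp : (1 - E) ∘L K ∘L (1 - E) - (1 - F) ∘L K ∘L (1 - F)
      = (((F - E) ∘L K) ∘L (1 - E)) + ((1 - F) ∘L (K ∘L (F - E))) := by
    have h : ∀ A B : H →L[ℂ] H, A ∘L B = A * B := fun _ _ => rfl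
    simp only [h]
    noncomm_ring
  have hfin : ‖(1 - E) ∘L K ∘L (1 - E) - (1 - F) ∘L K ∘L (1 - F)‖ < ε := by
    rw [hdecomp]
    have e1 : ((F - E) ∘L K) = -((E - F) ∘L K) := by
      rw [← neg_sub E F, ContinuousLinearMap.neg_comp]
    have e2 : (K ∘L (F - E)) = -(K ∘L (E - F)) := by
      rw [← neg_sub E F, ContinuousLinearMap.comp_neg]
    calc ‖(((F - E) ∘L K) ∘L (1 - E)) + ((1 - F) ∘L (K ∘L (F - E)))‖
        ≤ ‖((F - E) ∘L K) ∘L (1 - E)‖ + ‖(1 - F) ∘L (K ∘L (F - E))‖ := norm_add_le _ _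
      _ ≤ ‖(F - E) ∘L K‖ * ‖(1 - E : H →L[ℂ] H)‖
          + ‖(1 - F : H →L[ℂ] H)‖ * ‖K ∘L (F - E)‖ :=
          add_le_add (opNorm_comp_le _ _) (opNorm_comp_le _ _)
      _ = ‖(E - F) ∘L K‖ * ‖(1 - E : H →L[ℂ] H)‖
          + ‖(1 - F : H →L[ℂ] H)‖ * ‖K ∘L (E - F)‖ := by rw [e1, e2, norm_neg, norm_neg]
      _ ≤ (ε / 8) * 2 + 2 * (ε / 8) := by
          apply add_le_add
          · exact mul_le_mul hkey hnorm1E (norm_nonneg _) (by positivity)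
          · exact mul_le_mul hnorm1F hkey2 (norm_nonneg _) (by norm_num)
      _ = ε / 2 := by ring
      _ < ε := by linarith
  exact ⟨F, hFsa, hFproj, by rw [hrangeF]; exact hWfd, by rw [hrangeF]; exact hWV, hfin⟩
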